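/- (Stationarity-measure bound at a proximal point.) Let E = ℝ^d with the Euclidean norm, let f : E → ℝ be differentiable with L-Lipschitz gradient, and let r : E → ℝ be convex. Let α > 0 and x, y ∈ E, and let x⁺ be a global minimizer over E of z ↦ r(z) + (1/(2α))‖z − (x − α y)‖². Then g := −y − (1/α)(x⁺ − x) is a subgradient of r at x⁺ (i.e., r(z) ≥ r(x⁺) + ⟨g, z − x⁺⟩ for all z ∈ E), and ‖∇f(x⁺) + g‖² ≤ 3·(L² + 1/α²)·‖x⁺ − x‖² + 3·‖∇f(x) − y‖². -/

import Mathlib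

/-- Stationarity-measure bound at a proximal point: with `x⁺` a global minimizer of
`z ↦ r z + (1/(2α))‖z − (x − α y)‖²`, the vector `g = −y − (1/α)(x⁺ − x)` is a
subgradient of `r` at `x⁺`, and
`‖∇f(x⁺) + g‖² ≤ 3(L² + 1/α²)‖x⁺ − x‖² + 3‖∇f(x) − y‖²`. -/
theorem stmt13 (d : ℕ) (f : EuclideanSpace ℝ (Fin d) → ℝ) (L : ℝ)
    (hdiff : Differentiable ℝ f)
    (hlip : ∀ a b : EuclideanSpace ℝ (Fin d), ‖gradient f a - gradient f b‖ ≤ L * ‖a - b‖)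
    (r : EuclideanSpace ℝ (Fin d) → ℝ) (hr : ConvexOn ℝ Set.univ r)
    (α : ℝ) (hα : 0 < α)
    (x y xp : EuclideanSpace ℝ (Fin d))
    (hxp : IsMinOn (fun z => r z + (1 / (2 * α)) * ‖z - (x - α • y)‖ ^ 2) Set.univ xp) :
    (∀ z : EuclideanSpace ℝ (Fin d),
        r z ≥ r xp + inner ℝ (-y - (1 / α) • (xp - x)) (z - xp)) ∧
    ‖gradient f xp + (-y - (1 / α) • (xp - x))‖ ^ 2 ≤
      3 * (L ^ 2 + 1 / α ^ 2) * ‖xp - x‖ ^ 2 + 3 * ‖gradient f x - y‖ ^ 2 := by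
  have hαne : α ≠ 0 := ne_of_gt hα
  constructor
  · intro z
    set w : EuclideanSpace ℝ (Fin d) := z - xp with hw
    set v : EuclideanSpace ℝ (Fin d) := x - α • y with hv
    set u : EuclideanSpace ℝ (Fin d) := xp - v with hu
    have hg : (inner ℝ (-y - (1 / α) • (xp - x)) w : ℝ) = -(1/α) * inner ℝ u w := by
      have : (-y - (1 / α) • (xp - x)) = (-(1/α)) • u := by
        rw [hu, hv]
        match_scalars <;> field_simp
      rw [this, real_inner_smul_left]
    have key : ∀ t : ℝ, 0 < t → t ≤ 1 →
        r xp + (inner ℝ (-y - (1 / α) • (xp - x)) w : ℝ) ≤ r z + t * ‖w‖^2 / (2*α) := by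
      intro t ht ht1
      have hmin := hxp (Set.mem_univ ((1-t) • xp + t • z))
      simp only [Set.mem_setOf_eq] at hmin
      have hconv := hr.2 (Set.mem_univ xp) (Set.mem_univ z)
        (by linarith : (0:ℝ) ≤ 1 - t) (le_of_lt ht) (by ring)
      have h1 : (1-t) • xp + t • z - v = u + t • w := by
        rw [hu, hw]; module
      have h2 : ‖u + t • w‖^2 = ‖u‖^2 + 2*(t * inner ℝ u w) + t^2*‖w‖^2 := by
        rw [norm_add_sq_real, real_inner_smul_right, norm_smul]
        simp [abs_of_nonneg (le_of_lt ht)]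
        ring
      rw [h1, h2, ← hu] at hmin
      simp only [smul_eq_mul] at hconv
      rw [hg]
      have hexp : 1/(2*α) * (‖u‖^2 + 2*(t * inner ℝ u w) + t^2*‖w‖^2)
          = 1/(2*α) * ‖u‖^2 + (1/(2*α)) * (2*(t * inner ℝ u w) + t^2*‖w‖^2) := by ring
      rw [hexp] at hmin
      have hmin' : t * r xp ≤ t * r z + (1/(2*α)) * (2*(t * inner ℝ u w) + t^2*‖w‖^2) := by
        linarith [hmin, hconv]
      have hfin : t * (r xp + (-(1/α) * inner ℝ u w)) ≤ t * (r z + t * ‖w‖^2 / (2*α)) := by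
        have e : (1/(2*α)) * (2*(t * inner ℝ u w) + t^2*‖w‖^2)
            = t * ((1/α) * inner ℝ u w) + t * (t * ‖w‖^2 / (2*α)) := by
          field_simp
        rw [e] at hmin'
        linarith
      exact le_of_mul_le_mul_left (by linarith [hfin]) ht
    have : r xp + (inner ℝ (-y - (1 / α) • (xp - x)) w : ℝ) ≤ r z := by
      apply le_of_forall_pos_le_add
      intro ε hε
      have hden : (0:ℝ) < ‖w‖^2 + 1 := by positivity
      set t : ℝ := min 1 (α * ε / (‖w‖^2 + 1)) with htd
      have ht0 : 0 < t := lt_min one_pos (by positivity)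
      have ht1 : t ≤ 1 := min_le_left _ _
      have ht2 : t ≤ α * ε / (‖w‖^2 + 1) := min_le_right _ _
      have := key t ht0 ht1
      have hb : t * ‖w‖^2 / (2*α) ≤ ε := by
        rw [div_le_iff₀ (by positivity : (0:ℝ) < 2*α)]
        have h3 : t * (‖w‖^2 + 1) ≤ α * ε := by
          rw [← le_div_iff₀ hden] at *
          exact ht2
        nlinarith [norm_nonneg w, sq_nonneg (‖w‖), hε, hα]
      linarith
    linarith [this]
  · set a := gradient f xp - gradient f x with ha
    set b := gradient f x - y with hb
    set c := (-(1/α)) • (xp - x) with hc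
    have key : gradient f xp + (-y - (1 / α) • (xp - x)) = a + b + c := by
      rw [ha, hb, hc]; module
    rw [key]
    have h1 : ‖a‖ ≤ L * ‖xp - x‖ := hlip xp x
    have h2 : ‖c‖ = (1/α) * ‖xp - x‖ := by
      rw [hc, norm_smul, Real.norm_eq_abs, abs_neg,
        abs_of_pos (by positivity : (0:ℝ) < 1/α)]
    have htri : ‖a + b + c‖ ≤ ‖a‖ + ‖b‖ + ‖c‖ :=
      le_trans (norm_add_le _ _) (by linarith [norm_add_le a b])
    have hsq : ‖a + b + c‖^2 ≤ (‖a‖ + ‖b‖ + ‖c‖)^2 :=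
      pow_le_pow_left₀ (norm_nonneg _) htri 2
    have h3 : (‖a‖ + ‖b‖ + ‖c‖)^2 ≤ 3 * (‖a‖^2 + ‖b‖^2 + ‖c‖^2) := by
      nlinarith [sq_nonneg (‖a‖ - ‖b‖), sq_nonneg (‖b‖ - ‖c‖), sq_nonneg (‖a‖ - ‖c‖)]
    have h4 : ‖a‖^2 ≤ L^2 * ‖xp - x‖^2 := by
      nlinarith [norm_nonneg a, h1]
    have h5 : ‖c‖^2 = (1/α^2) * ‖xp - x‖^2 := by
      rw [h2]; field_simp
    have h6 : 3 * (L ^ 2 + 1 / α ^ 2) * ‖xp - x‖ ^ 2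
        = 3 * (L ^ 2 * ‖xp - x‖ ^ 2) + 3 * ((1 / α ^ 2) * ‖xp - x‖ ^ 2) := by ring
    linarith [hsq, h3, h4, h5, h6]
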